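/- Let Δ = (I,E) be a finite connected graph and for i ∈ I let v(i) be the number of edges incident to i. With the F₂-cochain complex C•(Δ) as above, dim_{F₂} Z¹(Δ) = Σ_{i∈I}(v(i) − 1) = 2|E| − |I|, where Z¹(Δ) = ker d¹. -/
import Mathlib


open Finset

attribute [local instance] Classical.propDecidable

variable (V : Type) [Fintype V] [DecidableEq V]

/-- The set of `r`-simplices of the simplicial complex `E(Δ)` associated to the graph
`Δ = (V, E)`: sets of `r+1` edges of `Δ` having a common vertex. -/
def Simp (G : SimpleGraph V) (r : ℕ) : Type :=
  {σ : Finset (Sym2 V) // σ.card = r + 1 ∧ (∀ e ∈ σ, e ∈ G.edgeSet) ∧ ∃ v : V, ∀ e ∈ σ, v ∈ e}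

noncomputable instance (G : SimpleGraph V) (r : ℕ) : Fintype (Simp V G r) :=
  Subtype.fintype _

/-- `C^r(Δ)`: the `𝔽₂`-vector space of `r`-cochains, i.e. functions from the
`r`-simplices to `𝔽₂`; the characteristic functions `a_σ` form its canonical basis. -/
abbrev Cochain (G : SimpleGraph V) (r : ℕ) : Type := Simp V G r → ZMod 2

/-- The coboundary map `d^r : C^r(Δ) → C^{r+1}(Δ)`, `a_σ ↦ Σ_{τ > σ} a_τ`;
equivalently `(d^r f)(τ) = Σ_{σ < τ} f(σ)`. -/
noncomputable def cobound (G : SimpleGraph V) (r : ℕ) :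
    Cochain V G r →ₗ[ZMod 2] Cochain V G (r + 1) where
  toFun f := fun τ => ∑ σ : Simp V G r, if σ.1 ⊆ τ.1 then f σ else 0
  map_add' f g := by
    funext τ
    simp only [Pi.add_apply]
    rw [← Finset.sum_add_distrib]
    exact Finset.sum_congr rfl fun σ _ => by split_ifs <;> simp
  map_smul' c f := by
    funext τ
    simp only [Pi.smul_apply, RingHom.id_apply]
    rw [Finset.smul_sum]
    exact Finset.sum_congr rfl fun σ _ => by split_ifs <;> simp

/-- The `0`-simplex `{e}` associated to an edge `e` of the graph. -/
noncomputable def edgeSimp (G : SimpleGraph V) (e : G.edgeSet) : Simp V G 0 :=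
  ⟨{e.1}, by
    refine ⟨Finset.card_singleton _, ?_, ⟨e.1.out.1, ?_⟩⟩ <;>
      · intro f hf
        rw [Finset.mem_singleton] at hf
        subst hf
        first
          | exact e.2
          | exact Sym2.out_fst_mem _⟩

/-- The basis `0`-cochain `a_e` attached to an edge `e`. -/
noncomputable def basisCochain (G : SimpleGraph V) (e : G.edgeSet) : Cochain V G 0 :=
  fun σ => if σ = edgeSimp V G e then 1 else 0

section Aux

variable {V}
variable (G : SimpleGraph V)

/-- a distinguished incident edge at each vertex (junk if isolated) -/
noncomputable def eps (i : V) : Sym2 V :=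
  if h : (G.incidenceSet i).Nonempty then h.choose else s(i, i)

lemma eps_mem {i : V} (h : (G.incidenceSet i).Nonempty) : eps G i ∈ G.incidenceSet i := by
  rw [eps, dif_pos h]; exact h.choose_spec

lemma common_unique {e f : Sym2 V} (hne : e ≠ f)
    {u v : V} (hue : u ∈ e) (huf : u ∈ f) (hve : v ∈ e) (hvf : v ∈ f) : u = v := by
  by_contra h
  exact hne (((Sym2.mem_and_mem_iff h).1 ⟨hue, hve⟩).trans
    ((Sym2.mem_and_mem_iff h).1 ⟨huf, hvf⟩).symm)

variable {G}

/-- common vertex of a simplex -/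
noncomputable def cv {r : ℕ} (σ : Simp V G r) : V := σ.2.2.2.choose

lemma cv_mem {r : ℕ} (σ : Simp V G r) : ∀ e ∈ σ.1, cv σ ∈ e := σ.2.2.2.choose_spec

lemma cv_unique (σ : Simp V G 1) {v : V} (h : ∀ e ∈ σ.1, v ∈ e) : v = cv σ := by
  obtain ⟨e, f, hef, hσ⟩ := Finset.card_eq_two.1 σ.2.1
  have he : e ∈ σ.1 := by rw [hσ]; simp
  have hf : f ∈ σ.1 := by rw [hσ]; simp
  exact common_unique hef (h e he) (h f hf) (cv_mem σ e he) (cv_mem σ f hf)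

/-- the 1-simplex made of two distinct edges at a vertex -/
noncomputable def mkPair {i : V} {e f : Sym2 V} (he : e ∈ G.incidenceSet i)
    (hf : f ∈ G.incidenceSet i) (hne : e ≠ f) : Simp V G 1 :=
  ⟨{e, f}, Finset.card_pair hne, by
    intro x hx
    rcases Finset.mem_insert.1 hx with rfl | hx
    · exact he.1
    · rw [Finset.mem_singleton] at hx; subst hx; exact hf.1,
   ⟨i, by
    intro x hx
    rcases Finset.mem_insert.1 hx with rfl | hx
    · exact he.2
    · rw [Finset.mem_singleton] at hx; subst hx; exact hf.2⟩⟩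

lemma cv_mkPair {i : V} {e f : Sym2 V} (he : e ∈ G.incidenceSet i)
    (hf : f ∈ G.incidenceSet i) (hne : e ≠ f) : cv (mkPair he hf hne) = i := by
  refine (cv_unique _ ?_).symm
  intro x hx
  rcases Finset.mem_insert.1 hx with rfl | hx
  · exact he.2
  · rw [Finset.mem_singleton] at hx; subst hx; exact hf.2

lemma two_subsets {e f g : Sym2 V} {s : Finset (Sym2 V)} (hs : s.card = 2)
    (hsub : s ⊆ {e, f, g}) : s = {e, f} ∨ s = {e, g} ∨ s = {f, g} := by
  obtain ⟨a, b, hab, rfl⟩ := Finset.card_eq_two.1 hs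
  have ha : a ∈ ({e, f, g} : Finset (Sym2 V)) := hsub (by simp)
  have hb : b ∈ ({e, f, g} : Finset (Sym2 V)) := hsub (by simp)
  simp only [Finset.mem_insert, Finset.mem_singleton] at ha hb
  rcases ha with rfl | rfl | rfl <;> rcases hb with rfl | rfl | rfl <;>
    simp_all [Finset.pair_comm]

/-- evaluation of the coboundary on a 2-simplex -/
lemma cobound_eval (c : Cochain V G 1) (τ : Simp V G 2) {e f g : Sym2 V}
    (hτ : τ.1 = {e, f, g}) (hef : e ≠ f) (heg : e ≠ g) (hfg : f ≠ g)
    (s1 s2 s3 : Simp V G 1) (h1 : s1.1 = {e, f}) (h2 : s2.1 = {e, g}) (h3 : s3.1 = {f, g}) :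
    cobound V G 1 c τ = c s1 + c s2 + c s3 := by
  have key : ∀ σ : Simp V G 1, σ.1 ⊆ τ.1 ↔ (σ = s1 ∨ σ = s2 ∨ σ = s3) := by
    intro σ
    constructor
    · intro hσ
      rw [hτ] at hσ
      rcases two_subsets σ.2.1 hσ with h | h | h
      · exact Or.inl (Subtype.ext (h.trans h1.symm))
      · exact Or.inr (Or.inl (Subtype.ext (h.trans h2.symm)))
      · exact Or.inr (Or.inr (Subtype.ext (h.trans h3.symm)))
    · rintro (rfl | rfl | rfl) <;> rw [hτ]
      · rw [h1]; intro x hx; simp only [Finset.mem_insert, Finset.mem_singleton] at hx ⊢; tauto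
      · rw [h2]; intro x hx; simp only [Finset.mem_insert, Finset.mem_singleton] at hx ⊢; tauto
      · rw [h3]; intro x hx; simp only [Finset.mem_insert, Finset.mem_singleton] at hx ⊢; tauto
  have h12 : s1 ≠ s2 := by
    intro h; apply hfg
    have : f ∈ s2.1 := by rw [← h, h1]; simp
    rw [h2] at this
    rcases Finset.mem_insert.1 this with rfl | h'
    · exact absurd rfl hef
    · exact Finset.mem_singleton.1 h'
  have h13 : s1 ≠ s3 := by
    intro h; apply heg.symm
    have : e ∈ s3.1 := by rw [← h, h1]; simp
    rw [h3] at this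
    rcases Finset.mem_insert.1 this with rfl | h'
    · exact absurd rfl hef
    · exact (Finset.mem_singleton.1 h') ▸ rfl
  have h23 : s2 ≠ s3 := by
    intro h; apply hef
    have : e ∈ s3.1 := by rw [← h, h2]; simp
    rw [h3] at this
    rcases Finset.mem_insert.1 this with rfl | h'
    · rfl
    · exact absurd (Finset.mem_singleton.1 h') heg
  show (∑ σ : Simp V G 1, if σ.1 ⊆ τ.1 then c σ else 0) = c s1 + c s2 + c s3
  calc (∑ σ : Simp V G 1, if σ.1 ⊆ τ.1 then c σ else 0)
      = ∑ σ ∈ Finset.univ.filter (fun σ : Simp V G 1 => σ.1 ⊆ τ.1), c σ := by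
        rw [Finset.sum_filter]
    _ = ∑ σ ∈ ({s1, s2, s3} : Finset (Simp V G 1)), c σ := by
        apply Finset.sum_congr _ (fun _ _ => rfl)
        ext σ
        simp [key σ]
    _ = c s1 + c s2 + c s3 := by
        rw [Finset.sum_insert (by simp [h12, h13]),
          Finset.sum_insert (by simp [h23]), Finset.sum_singleton, add_assoc]

/-- membership in the kernel gives triangle relations -/
lemma ker_triple {c : Cochain V G 1} (hc : c ∈ LinearMap.ker (cobound V G 1))
    {i : V} {e f g : Sym2 V} (he : e ∈ G.incidenceSet i) (hf : f ∈ G.incidenceSet i)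
    (hg : g ∈ G.incidenceSet i) (hef : e ≠ f) (heg : e ≠ g) (hfg : f ≠ g) :
    c (mkPair he hf hef) + c (mkPair he hg heg) + c (mkPair hf hg hfg) = 0 := by
  have hmem : ∀ x ∈ ({e, f, g} : Finset (Sym2 V)), x ∈ G.incidenceSet i := by
    intro x hx
    simp only [Finset.mem_insert, Finset.mem_singleton] at hx
    rcases hx with rfl | rfl | rfl <;> assumption
  have key := cobound_eval c
    (⟨{e, f, g}, by
      rw [Finset.card_insert_of_notMem (by simp [hef, heg]), Finset.card_pair hfg],
      fun x hx => (hmem x hx).1, ⟨i, fun x hx => (hmem x hx).2⟩⟩ : Simp V G 2)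
    rfl hef heg hfg (mkPair he hf hef) (mkPair he hg heg) (mkPair hf hg hfg) rfl rfl rfl
  rw [← key]
  exact congrFun (LinearMap.mem_ker.1 hc) _

end Aux

section Main

variable {V}
variable (G : SimpleGraph V)

/-- target space: for each vertex, functions on its incident edges minus the distinguished one -/
abbrev Tgt : Type :=
  ∀ i : V, {e : Sym2 V // e ∈ (G.incidenceFinset i).erase (eps G i)} → ZMod 2

noncomputable def Fmap : Cochain V G 1 →ₗ[ZMod 2] Tgt G where
  toFun c := fun i x =>
    c (mkPair (eps_mem G ⟨x.1, (G.mem_incidenceFinset i x.1).1 (Finset.mem_erase.1 x.2).2⟩)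
        ((G.mem_incidenceFinset i x.1).1 (Finset.mem_erase.1 x.2).2)
        (fun h => (Finset.mem_erase.1 x.2).1 h.symm))
  map_add' _ _ := rfl
  map_smul' _ _ := rfl

noncomputable def phi (c : Tgt G) (i : V) (e : Sym2 V) : ZMod 2 :=
  if h : e ∈ (G.incidenceFinset i).erase (eps G i) then c i ⟨e, h⟩ else 0

lemma phi_add (c c' : Tgt G) (i : V) (e : Sym2 V) :
    phi G (c + c') i e = phi G c i e + phi G c' i e := by
  unfold phi; split_ifs <;> simp

lemma phi_smul (r : ZMod 2) (c : Tgt G) (i : V) (e : Sym2 V) :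
    phi G (r • c) i e = r • phi G c i e := by
  unfold phi; split_ifs <;> simp

noncomputable def Bmap : Tgt G →ₗ[ZMod 2] Cochain V G 1 where
  toFun c := fun σ => ∑ e ∈ σ.1, phi G c (cv σ) e
  map_add' c c' := by
    funext σ
    simp only [Pi.add_apply]
    rw [← Finset.sum_add_distrib]
    exact Finset.sum_congr rfl fun e _ => phi_add G c c' _ e
  map_smul' r c := by
    funext σ
    simp only [Pi.smul_apply, RingHom.id_apply]
    rw [Finset.smul_sum]
    exact Finset.sum_congr rfl fun e _ => phi_smul G r c _ e

lemma Bmap_pair (c : Tgt G) {i : V} {e f : Sym2 V} (he : e ∈ G.incidenceSet i)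
    (hf : f ∈ G.incidenceSet i) (hne : e ≠ f) :
    Bmap G c (mkPair he hf hne) = phi G c i e + phi G c i f := by
  show (∑ x ∈ (mkPair he hf hne).1, phi G c (cv (mkPair he hf hne)) x) = _
  rw [cv_mkPair he hf hne]
  exact Finset.sum_pair hne

lemma zmod2_triple (a b c : ZMod 2) : a + b + (a + c) + (b + c) = 0 := by
  have h2 : (2 : ZMod 2) = 0 := rfl
  linear_combination (a + b + c) * h2

lemma Bmap_ker (c : Tgt G) : Bmap G c ∈ LinearMap.ker (cobound V G 1) := by
  rw [LinearMap.mem_ker]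
  funext τ
  obtain ⟨e, f, g, hef, heg, hfg, hτ⟩ := Finset.card_eq_three.1 τ.2.1
  have hmem : ∀ x ∈ τ.1, x ∈ G.incidenceSet (cv τ) :=
    fun x hx => ⟨τ.2.2.1 x hx, cv_mem τ x hx⟩
  have he : e ∈ G.incidenceSet (cv τ) := hmem e (by rw [hτ]; simp)
  have hf : f ∈ G.incidenceSet (cv τ) := hmem f (by rw [hτ]; simp)
  have hg : g ∈ G.incidenceSet (cv τ) := hmem g (by rw [hτ]; simp)
  rw [cobound_eval (Bmap G c) τ hτ hef heg hfg (mkPair he hf hef) (mkPair he hg heg)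
    (mkPair hf hg hfg) rfl rfl rfl, Bmap_pair, Bmap_pair, Bmap_pair]
  show _ = (0 : Cochain V G 2) τ
  rw [zmod2_triple]
  rfl

lemma Fmap_Bmap (c : Tgt G) : Fmap G (Bmap G c) = c := by
  funext i x
  have hx1 : x.1 ∈ G.incidenceSet i :=
    (G.mem_incidenceFinset i x.1).1 (Finset.mem_erase.1 x.2).2
  show Bmap G c (mkPair (eps_mem G ⟨x.1, hx1⟩) hx1 _) = c i x
  rw [Bmap_pair]
  have h1 : phi G c i (eps G i) = 0 := by
    unfold phi
    rw [dif_neg (Finset.notMem_erase _ _)]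
  have h2 : phi G c i x.1 = c i x := by
    unfold phi
    rw [dif_pos x.2]
  rw [h1, h2, zero_add]

lemma Fmap_inj {c : Cochain V G 1} (hc : c ∈ LinearMap.ker (cobound V G 1))
    (h0 : Fmap G c = 0) : c = 0 := by
  funext σ
  obtain ⟨e, g, heg, hσ⟩ := Finset.card_eq_two.1 σ.2.1
  have hmem : ∀ x ∈ σ.1, x ∈ G.incidenceSet (cv σ) :=
    fun x hx => ⟨σ.2.2.1 x hx, cv_mem σ x hx⟩
  have he : e ∈ G.incidenceSet (cv σ) := hmem e (by rw [hσ]; simp)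
  have hg : g ∈ G.incidenceSet (cv σ) := hmem g (by rw [hσ]; simp)
  set i := cv σ with hi
  have heps : eps G i ∈ G.incidenceSet i := eps_mem G ⟨e, he⟩
  have key : ∀ (a : Sym2 V) (ha : a ∈ G.incidenceSet i) (hne : a ≠ eps G i)
      (hne' : eps G i ≠ a), c (mkPair heps ha hne') = 0 := by
    intro a ha hne hne'
    have := congrFun (congrFun h0 i)
      ⟨a, Finset.mem_erase.2 ⟨hne, (G.mem_incidenceFinset i a).2 ha⟩⟩
    exact this
  by_cases hee : e = eps G i
  · have hgne : g ≠ eps G i := fun h => heg (hee.trans h.symm)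
    have : σ = mkPair heps hg (fun h => hgne h.symm) :=
      Subtype.ext (by rw [hσ, hee]; rfl)
    rw [this]
    exact key g hg hgne _
  · by_cases hgg : g = eps G i
    · have : σ = mkPair heps he (fun h => hee h.symm) :=
        Subtype.ext (by rw [hσ, hgg, Finset.pair_comm]; rfl)
      rw [this]
      exact key e he hee _
    · have h1 : eps G i ≠ e := fun h => hee h.symm
      have h2 : eps G i ≠ g := fun h => hgg h.symm
      have htri := ker_triple hc heps he hg h1 h2 heg
      rw [key e he hee h1, key g hg hgg h2, zero_add, zero_add] at htri
      have : σ = mkPair he hg heg := Subtype.ext hσ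
      rw [this, htri]
      rfl

end Main

/-- Lemma 4.16(a): for a finite connected graph `Δ = (V,E)`, with `v(i)` the number
of edges incident to the vertex `i`,
`dim_{𝔽₂} Z¹(Δ) = Σ_{i∈V} (v(i) − 1) = 2|E| − |V|`, where `Z¹(Δ) = ker d¹`. -/
theorem dim_Z1 (G : SimpleGraph V) (hconn : G.Connected) :
    Module.finrank (ZMod 2) (LinearMap.ker (cobound V G 1)) = ∑ i : V, (G.degree i - 1) ∧
    Module.finrank (ZMod 2) (LinearMap.ker (cobound V G 1)) =
      2 * Fintype.card G.edgeSet - Fintype.card V := by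
  haveI : Fact (Nat.Prime 2) := ⟨Nat.prime_two⟩
  have hcard : ∀ i : V, Fintype.card {e : Sym2 V // e ∈ (G.incidenceFinset i).erase (eps G i)}
      = G.degree i - 1 := by
    intro i
    rw [Fintype.card_coe]
    by_cases h : (G.incidenceSet i).Nonempty
    · rw [Finset.card_erase_of_mem ((G.mem_incidenceFinset i _).2 (eps_mem G h)),
        SimpleGraph.card_incidenceFinset_eq_degree]
    · have h1 : G.incidenceFinset i = ∅ := by
        ext e
        simp only [SimpleGraph.mem_incidenceFinset, Finset.notMem_empty, iff_false]
        exact fun he => h ⟨e, he⟩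
      have h2 : G.degree i = 0 := by
        rw [← SimpleGraph.card_incidenceFinset_eq_degree, h1, Finset.card_empty]
      rw [h1, h2, Finset.erase_empty, Finset.card_empty]
  have hequiv : Module.finrank (ZMod 2) (LinearMap.ker (cobound V G 1))
      = ∑ i : V, (G.degree i - 1) := by
    have hinj : Function.Injective
        ((Fmap G).comp (LinearMap.ker (cobound V G 1)).subtype) := by
      intro x y h
      have hsub : x.1 - y.1 = 0 := Fmap_inj G (sub_mem x.2 y.2) (by
        rw [map_sub, show Fmap G x.1 = Fmap G y.1 from h, sub_self])
      exact Subtype.ext (sub_eq_zero.1 hsub)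
    have hsurj : Function.Surjective
        ((Fmap G).comp (LinearMap.ker (cobound V G 1)).subtype) :=
      fun c => ⟨⟨Bmap G c, Bmap_ker G c⟩, Fmap_Bmap G c⟩
    have E := LinearEquiv.ofBijective _ ⟨hinj, hsurj⟩
    rw [E.finrank_eq, Module.finrank_pi_fintype]
    exact Finset.sum_congr rfl fun i _ => by rw [Module.finrank_pi, hcard i]
  refine ⟨hequiv, ?_⟩
  rw [hequiv]
  by_cases hV : Nontrivial V
  · have hdeg : ∀ i : V, 1 ≤ G.degree i := by
      intro i
      obtain ⟨j, hj⟩ := exists_ne i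
      obtain ⟨p⟩ := hconn.preconnected i j
      cases p with
      | nil => exact absurd rfl hj
      | cons h q => exact (G.degree_pos_iff_exists_adj i).2 ⟨_, h⟩
    have h1 : ∑ i : V, (G.degree i - 1) + Fintype.card V = ∑ i : V, G.degree i := by
      have h := Finset.sum_congr rfl fun i (_ : i ∈ Finset.univ) =>
        Nat.sub_add_cancel (hdeg i)
      rw [Finset.sum_add_distrib, Finset.sum_const, Finset.card_univ, smul_eq_mul,
        mul_one] at h
      exact h
    have h2 : ∑ i : V, G.degree i = 2 * Fintype.card G.edgeSet := by
      rw [SimpleGraph.sum_degrees_eq_twice_card_edges, SimpleGraph.edgeFinset_card]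
    omega
  · have hs : Subsingleton V := not_nontrivial_iff_subsingleton.1 hV
    have hdeg0 : ∀ i : V, G.degree i = 0 := by
      intro i
      by_contra h
      obtain ⟨w, hw⟩ := (G.degree_pos_iff_exists_adj i).1 (Nat.pos_of_ne_zero h)
      exact G.ne_of_adj hw (Subsingleton.elim i w)
    have hE : Fintype.card G.edgeSet = 0 := by
      rw [Fintype.card_eq_zero_iff]
      constructor
      rintro ⟨e, he⟩
      induction e using Sym2.ind with
      | _ a b => exact G.ne_of_adj he (Subsingleton.elim a b)
    rw [hE]
    simp [hdeg0]
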